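/- Define p6 : Bool → Bool → Bool → Bool → Bool by p6 a b c d = (a && !(c XOR d)) || (!((a || c) && d) && b), and let parity : Fin 16 → Bool map v to the parity (XOR) of the four bits of v. Let S : Fin 16 → Fin 16 be given by the value list [6, 5, 12, 10, 1, 14, 7, 9, 11, 0, 3, 13, 8, 15, 4, 2]. Then for all a b c d : Bool, p6 a b c d = parity (S (8·a + 4·b + 2·c + d)) (Booleans coerced to 0/1). Consequently, in the fault-free protected circuit, the error flag flag = p6 ⊕ w ⊕ x ⊕ y ⊕ z is always false. -/

import Mathlib

def rectS : Fin 16 → Fin 16 :=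
  ![6, 5, 12, 10, 1, 14, 7, 9, 11, 0, 3, 13, 8, 15, 4, 2]

/-- The redundantly computed parity bit of the S-box output. -/
def p6 (a b c d : Bool) : Bool :=
  (a && !(Bool.xor c d)) || (!((a || c) && d) && b)

/-- Hamming-weight parity of the 4-bit representation of `v`. -/
def par4 (v : Fin 16) : Bool :=
  Bool.xor (Bool.xor (v.val.testBit 3) (v.val.testBit 2))
    (Bool.xor (v.val.testBit 1) (v.val.testBit 0))

open Fin.NatCast

theorem p6_computes_parity (a b c d : Bool) :
    let z := Bool.xor (Bool.xor a b) (!c && d)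
    let y := Bool.xor b (Bool.xor (!c || a) d)
    let x := Bool.xor ((Bool.xor b c) || z) (Bool.xor (!c || a) d)
    let w := Bool.xor (Bool.xor b c) ((Bool.xor a b) && (Bool.xor (!c || a) d))
    p6 a b c d = par4 (rectS ((8 * a.toNat + 4 * b.toNat + 2 * c.toNat + d.toNat : ℕ) : Fin 16)) ∧
    Bool.xor (p6 a b c d) (Bool.xor (Bool.xor w x) (Bool.xor y z)) = false := by
  cases a <;> cases b <;> cases c <;> cases d <;> decide
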